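/- Let $\vec a=(a_1,\dots,a_n)\in[1,\infty)^n$. Then for all $x,y\in\mathbb{R}^n$, $|x+y|_{\vec a}\le|x|_{\vec a}+|y|_{\vec a}$. -/

import Mathlib

open MeasureTheory ENNReal Filter

noncomputable section

/-- The anisotropic homogeneous quasi-norm associated with `a`. -/
def anorm {n : ℕ} (a x : Fin n → ℝ) : ℝ :=
  sInf {t : ℝ | 0 < t ∧ ∑ i, x i ^ 2 / t ^ (2 * a i) = 1}

/-- The anisotropic ball with center `x` and radius `r`. -/
def aball {n : ℕ} (a x : Fin n → ℝ) (r : ℝ) : Set (Fin n → ℝ) :=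
  {y | anorm a (y - x) < r}

/-- The collection `𝔅` of all anisotropic balls. -/
def aballs {n : ℕ} (a : Fin n → ℝ) : Set (Set (Fin n → ℝ)) :=
  {B | ∃ x r, 0 < r ∧ B = aball a x r}

/-- Iterated mixed-norm of a nonnegative function: integrate the first variable
with exponent `p 0` (essential supremum if `p 0 = ∞`), then recurse. -/
def mixedNormF : {n : ℕ} → (Fin n → ℝ≥0∞) → ((Fin n → ℝ) → ℝ≥0∞) → ℝ≥0∞
  | 0, _, f => f fun i => i.elim0
  | _ + 1, p, f =>
    mixedNormF (fun i => p i.succ) fun y =>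
      if p 0 = ∞ then essSup (fun t => f (Fin.cons t y)) volume
      else (∫⁻ t, f (Fin.cons t y) ^ (p 0).toReal) ^ (1 / (p 0).toReal)

/-- The mixed-norm Lebesgue quasi-norm `‖f‖_{L^{p⃗}(ℝⁿ)}`. -/
def mixedNorm {n : ℕ} (p : Fin n → ℝ≥0∞) (f : (Fin n → ℝ) → ℂ) : ℝ≥0∞ :=
  mixedNormF p fun x => (‖f x‖₊ : ℝ≥0∞)

/-- `‖χ_B‖_{L^{p⃗}(ℝⁿ)}`. -/
def chiNorm {n : ℕ} (p : Fin n → ℝ≥0∞) (B : Set (Fin n → ℝ)) : ℝ≥0∞ :=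
  mixedNormF p (B.indicator fun _ => 1)

/-- `P` is (the function given by) a polynomial on `ℝⁿ` of total degree at most `s`. -/
def IsPolyDeg {n : ℕ} (s : ℕ) (P : (Fin n → ℝ) → ℂ) : Prop :=
  ∃ Q : MvPolynomial (Fin n) ℂ, Q.totalDegree ≤ s ∧
    ∀ x, P x = MvPolynomial.eval (fun i => (x i : ℂ)) Q

/-- The anisotropic mixed-norm Campanato quasi-norm `‖g‖_{𝓛^{a⃗}_{p⃗,q,s}(ℝⁿ)}`. -/
def campanatoNorm {n : ℕ} (a : Fin n → ℝ) (p : Fin n → ℝ≥0∞) (q : ℝ≥0∞) (s : ℕ)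
    (g : (Fin n → ℝ) → ℂ) : ℝ≥0∞ :=
  ⨆ B ∈ aballs a, ⨅ P ∈ {P : (Fin n → ℝ) → ℂ | IsPolyDeg s P},
    volume B / chiNorm p B *
      (if q = ∞ then essSup (fun x => (‖g x - P x‖₊ : ℝ≥0∞)) (volume.restrict B)
       else ((volume B)⁻¹ * ∫⁻ x in B, (‖g x - P x‖₊ : ℝ≥0∞) ^ q.toReal) ^ (1 / q.toReal))

/-- Local `q`-integrability on `ℝⁿ`. -/
def LocLp {n : ℕ} (q : ℝ≥0∞) (g : (Fin n → ℝ) → ℂ) : Prop :=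
  ∀ K : Set (Fin n → ℝ), IsCompact K → MemLp g q (volume.restrict K)

/-- The homogeneous dimension `ν = a_1 + ⋯ + a_n`. -/
def nuTotal {n : ℕ} (a : Fin n → ℝ) : ℝ := ∑ i, a i

/-- `a₋ = min {a_1, …, a_n}`. -/
def aMin {n : ℕ} (a : Fin n → ℝ) : ℝ := ⨅ i, a i

/-- `p₋ = min {p_1, …, p_n}`. -/
def pMinE {n : ℕ} (p : Fin n → ℝ≥0∞) : ℝ≥0∞ := ⨅ i, p i

/-- An anisotropic mixed-norm `(p⃗, r, s)`-atom supported on the anisotropic ball `B`. -/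
structure IsAtomFn {n : ℕ} (a : Fin n → ℝ) (p : Fin n → ℝ≥0∞) (r : ℝ≥0∞) (s : ℕ)
    (f : (Fin n → ℝ) → ℂ) (B : Set (Fin n → ℝ)) : Prop where
  measurable : Measurable f
  ball_mem : B ∈ aballs a
  support_subset : Function.support f ⊆ B
  size : eLpNorm f r volume ≤ volume B ^ (1 / r).toReal / chiNorm p B
  moments : ∀ α : Fin n → ℕ, (∑ i, α i) ≤ s → (∫ x, f x * ∏ i, (x i : ℂ) ^ α i) = 0

/-- The quantity `‖{∑_i [|λ_i| χ_{B_i} / ‖χ_{B_i}‖]^{p₋}}^{1/p₋}‖_{L^{p⃗}}` for a sequence. -/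
def atomSeqNorm {n : ℕ} (p : Fin n → ℝ≥0∞) (lam : ℕ → ℂ) (B : ℕ → Set (Fin n → ℝ)) : ℝ≥0∞ :=
  mixedNormF p fun x =>
    (∑' i, ((‖lam i‖₊ : ℝ≥0∞) * (B i).indicator (fun _ => 1) x / chiNorm p (B i))
        ^ (pMinE p).toReal) ^ (1 / (pMinE p).toReal)

/-- The quantity `‖{∑_{i=1}^m [|λ_i| χ_{B_i} / ‖χ_{B_i}‖]^{p₋}}^{1/p₋}‖_{L^{p⃗}}`
for a finite family. -/
def atomFinNorm {n : ℕ} (p : Fin n → ℝ≥0∞) {m : ℕ} (lam : Fin m → ℂ)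
    (B : Fin m → Set (Fin n → ℝ)) : ℝ≥0∞ :=
  mixedNormF p fun x =>
    (∑ i, ((‖lam i‖₊ : ℝ≥0∞) * (B i).indicator (fun _ => 1) x / chiNorm p (B i))
        ^ (pMinE p).toReal) ^ (1 / (pMinE p).toReal)

/-- Tempered distributions on `ℝⁿ`. -/
abbrev TDist (n : ℕ) := SchwartzMap (Fin n → ℝ) ℂ →L[ℂ] ℂ

/-- `T = ∑_i λ_i a_i` in `𝒮'(ℝⁿ)` with the `a_i` being `(p⃗,r,s)`-atoms on balls `B i`. -/
def HasAtomicRep {n : ℕ} (a : Fin n → ℝ) (p : Fin n → ℝ≥0∞) (r : ℝ≥0∞) (s : ℕ)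
    (T : TDist n) (lam : ℕ → ℂ) (A : ℕ → (Fin n → ℝ) → ℂ)
    (B : ℕ → Set (Fin n → ℝ)) : Prop :=
  (∀ i, IsAtomFn a p r s (A i) (B i)) ∧
    ∀ φ : SchwartzMap (Fin n → ℝ) ℂ,
      Filter.Tendsto (fun N => ∑ i ∈ Finset.range N, lam i * ∫ x, A i x * φ x)
        Filter.atTop (nhds (T φ))

/-- Membership in the anisotropic mixed-norm atomic Hardy space. -/
def MemHardy {n : ℕ} (a : Fin n → ℝ) (p : Fin n → ℝ≥0∞) (r : ℝ≥0∞) (s : ℕ)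
    (T : TDist n) : Prop :=
  ∃ lam A B, HasAtomicRep a p r s T lam A B

/-- The atomic Hardy space quasi-norm. -/
def hardyNorm {n : ℕ} (a : Fin n → ℝ) (p : Fin n → ℝ≥0∞) (r : ℝ≥0∞) (s : ℕ)
    (T : TDist n) : ℝ≥0∞ :=
  ⨅ (lam : ℕ → ℂ) (A : ℕ → (Fin n → ℝ) → ℂ) (B : ℕ → Set (Fin n → ℝ))
    (_ : HasAtomicRep a p r s T lam A B), atomSeqNorm p lam B

/-- `‖L‖ = sup {|L f| : f ∈ H, ‖f‖_H ≤ 1}`. -/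
def hardyOpNorm {n : ℕ} (a : Fin n → ℝ) (p : Fin n → ℝ≥0∞) (r : ℝ≥0∞) (s : ℕ)
    (L : TDist n → ℂ) : ℝ≥0∞ :=
  ⨆ T ∈ {T : TDist n | MemHardy a p r s T ∧ hardyNorm a p r s T ≤ 1}, (‖L T‖₊ : ℝ≥0∞)

/-- `P = Π_B f` is the natural projection of `f` onto polynomials of degree at most `s`
relative to `B`. -/
def IsProj {n : ℕ} (s : ℕ) (B : Set (Fin n → ℝ)) (f P : (Fin n → ℝ) → ℂ) : Prop :=
  IsPolyDeg s P ∧ ∀ q : (Fin n → ℝ) → ℂ, IsPolyDeg s q →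
    (∫ x in B, P x * q x) = ∫ x in B, f x * q x

namespace AnormAux

variable {n : ℕ}

def F (a x : Fin n → ℝ) (t : ℝ) : ℝ := ∑ i, x i ^ 2 / t ^ (2 * a i)

lemma anorm_def (a x : Fin n → ℝ) :
    anorm a x = sInf {t : ℝ | 0 < t ∧ F a x t = 1} := rfl

lemma anorm_zero (a : Fin n → ℝ) : anorm a (0 : Fin n → ℝ) = 0 := by
  have h : {t : ℝ | 0 < t ∧ ∑ i, (0 : Fin n → ℝ) i ^ 2 / t ^ (2 * a i) = 1} = ∅ := by
    ext t; simp
  rw [anorm, h, Real.sInf_empty]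

lemma F_strictAntiOn (a x : Fin n → ℝ) (ha : ∀ i, 1 ≤ a i) (hx : x ≠ 0) :
    StrictAntiOn (F a x) (Set.Ioi 0) := by
  intro s hs t ht hst
  simp only [Set.mem_Ioi] at hs ht
  obtain ⟨j, hj⟩ := Function.ne_iff.mp hx
  simp only [Pi.zero_apply] at hj
  apply Finset.sum_lt_sum
  · intro i _
    have h1 : (0:ℝ) < s ^ (2 * a i) := Real.rpow_pos_of_pos hs _
    have h2 : s ^ (2 * a i) ≤ t ^ (2 * a i) :=
      Real.rpow_le_rpow hs.le hst.le (by have := ha i; linarith)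
    exact div_le_div_of_nonneg_left (sq_nonneg _) h1 h2
  · refine ⟨j, Finset.mem_univ j, ?_⟩
    have hj2 : (0:ℝ) < x j ^ 2 := by positivity
    have h1 : (0:ℝ) < s ^ (2 * a j) := Real.rpow_pos_of_pos hs _
    have h2 : s ^ (2 * a j) < t ^ (2 * a j) :=
      Real.rpow_lt_rpow hs.le hst (by have := ha j; linarith)
    exact div_lt_div_of_pos_left hj2 h1 h2

lemma F_continuousOn (a x : Fin n → ℝ) : ContinuousOn (F a x) (Set.Ioi 0) := by
  apply continuousOn_finset_sum
  intro i _
  apply ContinuousOn.div continuousOn_const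
  · intro t ht
    exact (Real.continuousAt_rpow_const t _ (Or.inl (ne_of_gt ht))).continuousWithinAt
  · intro t ht
    exact ne_of_gt (Real.rpow_pos_of_pos ht _)

lemma exists_root_le (a x : Fin n → ℝ) (ha : ∀ i, 1 ≤ a i) (hx : x ≠ 0) {r : ℝ}
    (hr : 0 < r) (hF : F a x r ≤ 1) : ∃ t, 0 < t ∧ t ≤ r ∧ F a x t = 1 := by
  obtain ⟨j, hj⟩ := Function.ne_iff.mp hx
  simp only [Pi.zero_apply] at hj
  set ε := min r (min 1 (x j ^ 2)) with hεdef
  have hε0 : 0 < ε := lt_min hr (lt_min one_pos (by positivity))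
  have hεr : ε ≤ r := min_le_left _ _
  have hε1 : ε ≤ 1 := le_trans (min_le_right _ _) (min_le_left _ _)
  have hεxj : ε ≤ x j ^ 2 := le_trans (min_le_right _ _) (min_le_right _ _)
  have h1 : 1 ≤ F a x ε := by
    have hsingle : x j ^ 2 / ε ^ (2 * a j) ≤ F a x ε := by
      apply Finset.single_le_sum (f := fun i => x i ^ 2 / ε ^ (2 * a i))
        (fun i _ => by positivity) (Finset.mem_univ j)
    refine le_trans ?_ hsingle
    rw [le_div_iff₀ (Real.rpow_pos_of_pos hε0 _), one_mul]
    have h2 : ε ^ (2 * a j) ≤ ε ^ (1:ℝ) :=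
      Real.rpow_le_rpow_of_exponent_ge hε0 hε1 (by have := ha j; linarith)
    rw [Real.rpow_one] at h2
    linarith
  have hsub : Set.Icc ε r ⊆ Set.Ioi 0 := fun t ht => lt_of_lt_of_le hε0 ht.1
  have := intermediate_value_Icc' hεr ((F_continuousOn a x).mono hsub)
  obtain ⟨t, htmem, htF⟩ := this ⟨hF, h1⟩
  exact ⟨t, lt_of_lt_of_le hε0 htmem.1, htmem.2, htF⟩

lemma exists_root (a x : Fin n → ℝ) (ha : ∀ i, 1 ≤ a i) (hx : x ≠ 0) :
    ∃ t, 0 < t ∧ F a x t = 1 := by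
  set T : ℝ := (∑ i, x i ^ 2) + 1 with hT
  have hsum : (0:ℝ) ≤ ∑ i, x i ^ 2 := Finset.sum_nonneg fun i _ => sq_nonneg _
  have hT1 : 1 ≤ T := by linarith
  have hT0 : 0 < T := by linarith
  have hFT : F a x T ≤ 1 := by
    have hterm : ∀ i, x i ^ 2 / T ^ (2 * a i) ≤ x i ^ 2 / T ^ (2:ℝ) := by
      intro i
      apply div_le_div_of_nonneg_left (sq_nonneg _) (Real.rpow_pos_of_pos hT0 _)
      exact Real.rpow_le_rpow_of_exponent_le hT1 (by have := ha i; linarith)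
    calc F a x T ≤ ∑ i, x i ^ 2 / T ^ (2:ℝ) := Finset.sum_le_sum fun i _ => hterm i
      _ = (∑ i, x i ^ 2) / T ^ (2:ℝ) := by rw [Finset.sum_div]
      _ ≤ 1 := by
          rw [div_le_one (Real.rpow_pos_of_pos hT0 _)]
          have : T ^ (2:ℝ) = T ^ (2:ℕ) := by
            rw [← Real.rpow_natCast T 2]; norm_num
          rw [this]
          nlinarith
  obtain ⟨t, ht, _, htF⟩ := exists_root_le a x ha hx hT0 hFT
  exact ⟨t, ht, htF⟩

lemma anorm_spec (a x : Fin n → ℝ) (ha : ∀ i, 1 ≤ a i) (hx : x ≠ 0) :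
    0 < anorm a x ∧ F a x (anorm a x) = 1 := by
  obtain ⟨t₀, ht₀, hFt₀⟩ := exists_root a x ha hx
  have hset : {t : ℝ | 0 < t ∧ F a x t = 1} = {t₀} := by
    ext t
    simp only [Set.mem_setOf_eq, Set.mem_singleton_iff]
    constructor
    · rintro ⟨ht, hF⟩
      by_contra hne
      rcases lt_or_gt_of_ne hne with h | h
      · have := F_strictAntiOn a x ha hx (Set.mem_Ioi.mpr ht) (Set.mem_Ioi.mpr ht₀) h
        rw [hF, hFt₀] at this; exact lt_irrefl _ this
      · have := F_strictAntiOn a x ha hx (Set.mem_Ioi.mpr ht₀) (Set.mem_Ioi.mpr ht) h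
        rw [hF, hFt₀] at this; exact lt_irrefl _ this
    · rintro rfl; exact ⟨ht₀, hFt₀⟩
  rw [anorm_def, hset, csInf_singleton]
  exact ⟨ht₀, hFt₀⟩

lemma anorm_le (a x : Fin n → ℝ) (ha : ∀ i, 1 ≤ a i) (hx : x ≠ 0) {r : ℝ}
    (hr : 0 < r) (hF : F a x r ≤ 1) : anorm a x ≤ r := by
  obtain ⟨t, ht, htr, htF⟩ := exists_root_le a x ha hx hr hF
  refine le_trans (csInf_le ⟨0, fun s hs => hs.1.le⟩ ⟨ht, htF⟩) htr

lemma sq_div_rpow {r : ℝ} (hr : 0 < r) (c ai : ℝ) :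
    (c / r ^ ai) ^ 2 = c ^ 2 / r ^ (2 * ai) := by
  rw [div_pow, ← Real.rpow_natCast (r ^ ai) 2, ← Real.rpow_mul hr.le]
  norm_num [mul_comm]

end AnormAux

theorem statement16 {n : ℕ} (a : Fin n → ℝ) (ha : ∀ i, 1 ≤ a i) (x y : Fin n → ℝ) :
    anorm a (x + y) ≤ anorm a x + anorm a y := by
  by_cases hx : x = 0
  · subst hx; rw [zero_add, AnormAux.anorm_zero]; simp
  by_cases hy : y = 0
  · subst hy; rw [add_zero, AnormAux.anorm_zero, add_zero]
  obtain ⟨hs, hFs⟩ := AnormAux.anorm_spec a x ha hx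
  obtain ⟨ht, hFt⟩ := AnormAux.anorm_spec a y ha hy
  set s := anorm a x with hsdef
  set t := anorm a y with htdef
  set r : ℝ := s + t with hrdef
  have hr0 : (0:ℝ) < r := add_pos hs ht
  by_cases hxy : x + y = 0
  · rw [hxy, AnormAux.anorm_zero]; exact hr0.le
  apply AnormAux.anorm_le a (x + y) ha hxy hr0
  -- key estimate : F a (x+y) r ≤ 1
  set u : EuclideanSpace ℝ (Fin n) := WithLp.toLp 2 (fun i => x i / r ^ (a i)) with hu
  set v : EuclideanSpace ℝ (Fin n) := WithLp.toLp 2 (fun i => y i / r ^ (a i)) with hv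
  have hbound : ∀ (z : Fin n → ℝ) (c : ℝ) (w : EuclideanSpace ℝ (Fin n)),
      (∀ i, w i = z i / r ^ (a i)) → 0 < c → c ≤ r → AnormAux.F a z c = 1 →
      ‖w‖ ≤ c / r := by
    intro z c w hw hc hcr hFz
    have hterm : ∀ i, (z i / r ^ (a i)) ^ 2 ≤ (c / r) ^ 2 * (z i ^ 2 / c ^ (2 * a i)) := by
      intro i
      have hre : (0:ℝ) < r ^ (2 * a i) := Real.rpow_pos_of_pos hr0 _
      have hce : (0:ℝ) < c ^ (2 * a i) := Real.rpow_pos_of_pos hc _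
      have key : (c / r) ^ (2 * a i) ≤ (c / r) ^ ((2:ℕ):ℝ) := by
        apply Real.rpow_le_rpow_of_exponent_ge (by positivity) ((div_le_one hr0).mpr hcr)
        push_cast
        have := ha i; linarith
      rw [Real.rpow_natCast, Real.div_rpow hc.le hr0.le] at key
      -- key : c^(2*a i) / r^(2*a i) ≤ (c/r)^2
      have key2 : 1 / r ^ (2 * a i) ≤ (c / r) ^ 2 / c ^ (2 * a i) := by
        rw [div_le_div_iff₀ hre hce, one_mul]
        rw [div_le_iff₀ hre] at key
        exact key
      calc (z i / r ^ (a i)) ^ 2 = z i ^ 2 * (1 / r ^ (2 * a i)) := by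
            rw [AnormAux.sq_div_rpow hr0]; ring
        _ ≤ z i ^ 2 * ((c / r) ^ 2 / c ^ (2 * a i)) :=
            mul_le_mul_of_nonneg_left key2 (sq_nonneg _)
        _ = (c / r) ^ 2 * (z i ^ 2 / c ^ (2 * a i)) := by ring
    have hsum : ∑ i, (z i / r ^ (a i)) ^ 2 ≤ (c / r) ^ 2 := by
      calc ∑ i, (z i / r ^ (a i)) ^ 2
          ≤ ∑ i, (c / r) ^ 2 * (z i ^ 2 / c ^ (2 * a i)) :=
            Finset.sum_le_sum fun i _ => hterm i
        _ = (c / r) ^ 2 * AnormAux.F a z c := by rw [AnormAux.F, ← Finset.mul_sum]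
        _ = (c / r) ^ 2 := by rw [hFz, mul_one]
    rw [EuclideanSpace.norm_eq]
    simp only [hw]
    have hsq : Real.sqrt (∑ i, ‖z i / r ^ (a i)‖ ^ 2) ≤ Real.sqrt ((c / r) ^ 2) :=
      Real.sqrt_le_sqrt (by simp only [Real.norm_eq_abs, sq_abs]; exact hsum)
    rwa [Real.sqrt_sq (by positivity)] at hsq
  have hu_le : ‖u‖ ≤ s / r :=
    hbound x s u (fun i => rfl) hs (le_add_of_nonneg_right ht.le) hFs
  have hv_le : ‖v‖ ≤ t / r :=
    hbound y t v (fun i => rfl) ht (le_add_of_nonneg_left hs.le) hFt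
  have huv : ‖u + v‖ ≤ 1 := by
    calc ‖u + v‖ ≤ ‖u‖ + ‖v‖ := norm_add_le u v
      _ ≤ s / r + t / r := add_le_add hu_le hv_le
      _ = 1 := by rw [← add_div, ← hrdef, div_self hr0.ne']
  have hFr : AnormAux.F a (x + y) r = ‖u + v‖ ^ 2 := by
    rw [EuclideanSpace.norm_eq, Real.sq_sqrt (Finset.sum_nonneg fun i _ => sq_nonneg _)]
    apply Finset.sum_congr rfl
    intro i _
    have huvi : (u + v) i = (x i + y i) / r ^ (a i) := by
      simp [hu, hv, ← add_div]
    rw [huvi, Real.norm_eq_abs, sq_abs, AnormAux.sq_div_rpow hr0, Pi.add_apply]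
  rw [hFr]
  calc ‖u + v‖ ^ 2 ≤ 1 ^ 2 := pow_le_pow_left₀ (norm_nonneg _) huv 2
    _ = 1 := one_pow 2
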